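/- (Upper bound on the subtractive SEE objective, inequality (B.8), full form.) Let I and n be positive natural numbers. For each i : Fin I let C i, F i, G i : Matrix (Fin n) (Fin n) ℂ be positive semidefinite, let e, b, Pp, Ps, Pz : Fin I → ℝ be nonnegative, let σ2 > 0, η ≥ 0, Pb ≥ 0, P_CBS ≥ 0, and assume ∑ i, (Ps i + Pz i) ≤ P_CBS. For each i set A i := Pp i • C i + Pz i • G i + σ2 • 1 and B i := A i + Ps i • F i, and set f₁ i := Real.logb 2 (b i * Pp i + e i * Ps i + σ2) + Real.logb 2 ((A i).det.re) and f₂ i := Real.logb 2 (b i * Pp i + σ2) + Real.logb 2 ((B i).det.re). Then ∑ i, (f₁ i - f₂ i) - η * (∑ i, (Ps i + Pz i) + Pb) ≤ (max over i of e i) * P_CBS / (σ2 * Real.log 2). -/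

import Mathlib

open scoped ComplexOrder
open Matrix

lemma smul_psd {n : ℕ} {c : ℝ} (hc : 0 ≤ c) {M : Matrix (Fin n) (Fin n) ℂ}
    (hM : M.PosSemidef) : (c • M).PosSemidef := by
  have h1 : (c • M) = (c : ℂ) • M := by
    ext i j; simp [Matrix.smul_apply, Complex.real_smul]
  rw [h1]
  constructor
  · show ((c : ℂ) • M)ᴴ = _
    rw [Matrix.conjTranspose_smul, hM.1]
    congr 1
    exact Complex.conj_ofReal c
  · intro x
    exact (hM.smul (a := (c : ℂ)) (by exact_mod_cast hc)).2 x

lemma one_le_det_one_add {n : ℕ} {M : Matrix (Fin n) (Fin n) ℂ}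
    (hM : M.PosSemidef) : (1 : ℂ) ≤ (1 + M).det := by
  have hH := hM.1
  have hU : (hH.eigenvectorUnitary : Matrix (Fin n) (Fin n) ℂ) *
      star (hH.eigenvectorUnitary : Matrix (Fin n) (Fin n) ℂ) = 1 :=
    Matrix.mem_unitaryGroup_iff.mp hH.eigenvectorUnitary.2
  have hU' : star (hH.eigenvectorUnitary : Matrix (Fin n) (Fin n) ℂ) *
      (hH.eigenvectorUnitary : Matrix (Fin n) (Fin n) ℂ) = 1 :=
    Matrix.mem_unitaryGroup_iff'.mp hH.eigenvectorUnitary.2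
  have hspec := hH.spectral_theorem
  rw [Unitary.conjStarAlgAut_apply] at hspec
  have h1M : (1 : Matrix (Fin n) (Fin n) ℂ) + M =
      (hH.eigenvectorUnitary : Matrix (Fin n) (Fin n) ℂ) *
        ((1 : Matrix (Fin n) (Fin n) ℂ) + Matrix.diagonal (RCLike.ofReal ∘ hH.eigenvalues)) *
        star (hH.eigenvectorUnitary : Matrix (Fin n) (Fin n) ℂ) := by
    rw [Matrix.mul_add, Matrix.add_mul, Matrix.mul_one, hU, ← hspec]
  have hdiag : ((1 : Matrix (Fin n) (Fin n) ℂ) + Matrix.diagonal (RCLike.ofReal ∘ hH.eigenvalues)) =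
      Matrix.diagonal (fun i => 1 + (hH.eigenvalues i : ℂ)) := by
    rw [← Matrix.diagonal_one, Matrix.diagonal_add]
    rfl
  have hdet : (1 + M).det = ∏ i, (1 + (hH.eigenvalues i : ℂ)) := by
    rw [h1M, Matrix.det_mul, Matrix.det_mul, mul_comm, ← mul_assoc, ← Matrix.det_mul, hU',
      Matrix.det_one, one_mul, hdiag, Matrix.det_diagonal]
  rw [hdet]
  have hcast : ∏ i, (1 + (hH.eigenvalues i : ℂ)) = ((∏ i, (1 + hH.eigenvalues i) : ℝ) : ℂ) := by
    push_cast; ring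
  rw [hcast, ← Complex.ofReal_one, Complex.real_le_real]
  calc (1:ℝ) = ∏ _i : Fin n, (1:ℝ) := by simp
    _ ≤ ∏ i, (1 + hH.eigenvalues i) :=
      Finset.prod_le_prod (fun i _ => zero_le_one) fun i _ => by
        linarith [hM.eigenvalues_nonneg i]

open scoped MatrixOrder in
lemma det_le_det_add {n : ℕ} {A S : Matrix (Fin n) (Fin n) ℂ}
    (hA : A.PosDef) (hS : S.PosSemidef) : A.det ≤ (A + S).det := by
  have hR : (CFC.sqrt A).PosSemidef := Matrix.nonneg_iff_posSemidef.mp (CFC.sqrt_nonneg A)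
  set R : Matrix (Fin n) (Fin n) ℂ := CFC.sqrt A with hRdef
  have hRR : R * R = A := CFC.sqrt_mul_sqrt_self A hA.posSemidef.nonneg
  have hdetA : (0 : ℂ) < A.det := hA.det_pos
  have hdetR : R.det ≠ 0 := by
    intro h
    have hh : A.det = R.det * R.det := by rw [← hRR, Matrix.det_mul]
    rw [hh, h, mul_zero] at hdetA
    exact lt_irrefl _ hdetA
  have hUnit : IsUnit R.det := isUnit_iff_ne_zero.mpr hdetR
  have hRinv : R * R⁻¹ = 1 := Matrix.mul_nonsing_inv R hUnit
  have hinvR : R⁻¹ * R = 1 := Matrix.nonsing_inv_mul R hUnit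
  have hRherm : (R⁻¹)ᴴ = R⁻¹ := by
    rw [Matrix.conjTranspose_nonsing_inv, hR.1]
  have hM : (R⁻¹ * S * R⁻¹).PosSemidef := by
    have := hS.conjTranspose_mul_mul_same (R⁻¹)
    rwa [hRherm] at this
  have hAS : A + S = R * (1 + R⁻¹ * S * R⁻¹) * R := by
    rw [Matrix.mul_add, Matrix.mul_one, Matrix.add_mul, hRR]
    rw [Matrix.mul_assoc, Matrix.mul_assoc, hinvR, Matrix.mul_one, ← Matrix.mul_assoc, hRinv,
      Matrix.one_mul]
  have hdet : (A + S).det = A.det * (1 + R⁻¹ * S * R⁻¹).det := by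
    rw [hAS, Matrix.det_mul, Matrix.det_mul, ← hRR, Matrix.det_mul]; ring
  rw [hdet]
  exact le_mul_of_one_le_right hdetA.le (one_le_det_one_add hM)


/-- Upper bound on the subtractive SEE objective (inequality (B.8), full form). -/
theorem see_objective_upper_bound (I : ℕ) (hI : 0 < I) (n : ℕ) (hn : 0 < n)
    (C F G : Fin I → Matrix (Fin n) (Fin n) ℂ)
    (hC : ∀ i, (C i).PosSemidef) (hF : ∀ i, (F i).PosSemidef) (hG : ∀ i, (G i).PosSemidef)
    (e b Pp Ps Pz : Fin I → ℝ)
    (he : ∀ i, 0 ≤ e i) (hb : ∀ i, 0 ≤ b i) (hPp : ∀ i, 0 ≤ Pp i)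
    (hPs : ∀ i, 0 ≤ Ps i) (hPz : ∀ i, 0 ≤ Pz i)
    (σ2 : ℝ) (hσ2 : 0 < σ2) (η : ℝ) (hη : 0 ≤ η) (Pb : ℝ) (hPb : 0 ≤ Pb)
    (P_CBS : ℝ) (hP : 0 ≤ P_CBS) (hsum : ∑ i, (Ps i + Pz i) ≤ P_CBS)
    (A B : Fin I → Matrix (Fin n) (Fin n) ℂ)
    (hA : ∀ i, A i = Pp i • C i + Pz i • G i + σ2 • (1 : Matrix (Fin n) (Fin n) ℂ))
    (hB : ∀ i, B i = A i + Ps i • F i)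
    (f₁ f₂ : Fin I → ℝ)
    (hf₁ : ∀ i, f₁ i = Real.logb 2 (b i * Pp i + e i * Ps i + σ2)
        + Real.logb 2 (((A i).det).re))
    (hf₂ : ∀ i, f₂ i = Real.logb 2 (b i * Pp i + σ2)
        + Real.logb 2 (((B i).det).re)) :
    ∑ i, (f₁ i - f₂ i) - η * (∑ i, (Ps i + Pz i) + Pb) ≤
      (Finset.univ.sup' (Finset.univ_nonempty_iff.mpr ⟨⟨0, hI⟩⟩) e) * P_CBS /
        (σ2 * Real.log 2) := by
  set m := Finset.univ.sup' (Finset.univ_nonempty_iff.mpr ⟨⟨0, hI⟩⟩) e with hm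
  have hm0 : 0 ≤ m := le_trans (he ⟨0, hI⟩) (Finset.le_sup' e (Finset.mem_univ _))
  have hlog2 : 0 < Real.log 2 := Real.log_pos one_lt_two
  have hσlog : 0 < σ2 * Real.log 2 := mul_pos hσ2 hlog2
  -- per-index bound
  have key : ∀ i, f₁ i - f₂ i ≤ e i * Ps i / (σ2 * Real.log 2) := by
    intro i
    have hσ1 : (σ2 • (1 : Matrix (Fin n) (Fin n) ℂ)).PosDef := by
      have hd : (σ2 • (1 : Matrix (Fin n) (Fin n) ℂ)) =
          Matrix.diagonal (fun _ => (σ2 : ℂ)) := by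
        ext k l
        by_cases h : k = l <;>
          simp [Matrix.smul_apply, Matrix.one_apply, Matrix.diagonal, h, Complex.real_smul]
      rw [hd]
      exact Matrix.PosDef.diagonal fun _ => by exact_mod_cast hσ2
    have hAd : (A i).PosDef := by
      rw [hA i]
      exact Matrix.PosDef.posSemidef_add
        ((smul_psd (hPp i) (hC i)).add (smul_psd (hPz i) (hG i))) hσ1
    have hBd : (B i).PosDef := by
      rw [hB i]
      exact hAd.add_posSemidef (smul_psd (hPs i) (hF i))
    have hdetAB : (A i).det ≤ (B i).det := by
      rw [hB i]
      exact det_le_det_add hAd (smul_psd (hPs i) (hF i))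
    have hdA : 0 < ((A i).det).re := by
      have := hAd.det_pos
      rw [Complex.lt_def] at this
      simpa using this.1
    have hreAB : ((A i).det).re ≤ ((B i).det).re := (Complex.le_def.mp hdetAB).1
    have hx : 0 < b i * Pp i + σ2 := by nlinarith [hb i, hPp i, mul_nonneg (hb i) (hPp i)]
    have heP : 0 ≤ e i * Ps i := mul_nonneg (he i) (hPs i)
    have hy : 0 < b i * Pp i + e i * Ps i + σ2 := by linarith
    -- log-det part ≤ 0
    have hld : Real.logb 2 (((A i).det).re) ≤ Real.logb 2 (((B i).det).re) :=
      Real.logb_le_logb_of_le one_lt_two hdA hreAB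
    -- log ratio part
    have hlr : Real.logb 2 (b i * Pp i + e i * Ps i + σ2) - Real.logb 2 (b i * Pp i + σ2)
        ≤ e i * Ps i / (σ2 * Real.log 2) := by
      set x := b i * Pp i + σ2 with hxdef
      have hyx : b i * Pp i + e i * Ps i + σ2 = x + e i * Ps i := by ring
      rw [hyx]
      rw [Real.logb, Real.logb, div_sub_div_same]
      have h1 : Real.log (x + e i * Ps i) - Real.log x = Real.log ((x + e i * Ps i) / x) := by
        rw [Real.log_div (by linarith) (ne_of_gt hx)]
      have h2 : Real.log ((x + e i * Ps i) / x) ≤ (x + e i * Ps i) / x - 1 :=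
        Real.log_le_sub_one_of_pos (div_pos (by linarith) hx)
      have h3 : (x + e i * Ps i) / x - 1 = e i * Ps i / x := by
        field_simp
        ring
      have h4 : e i * Ps i / x ≤ e i * Ps i / σ2 :=
        div_le_div_of_nonneg_left heP hσ2 (by linarith [mul_nonneg (hb i) (hPp i)])
      have h5 : Real.log (x + e i * Ps i) - Real.log x ≤ e i * Ps i / σ2 := by
        rw [h1]; linarith
      calc (Real.log (x + e i * Ps i) - Real.log x) / Real.log 2
          ≤ (e i * Ps i / σ2) / Real.log 2 :=
            div_le_div_of_nonneg_right h5 hlog2.le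
        _ = e i * Ps i / (σ2 * Real.log 2) := by
            rw [div_div]
    rw [hf₁ i, hf₂ i]
    linarith
  have hsum1 : ∑ i, (f₁ i - f₂ i) ≤ ∑ i, e i * Ps i / (σ2 * Real.log 2) :=
    Finset.sum_le_sum fun i _ => key i
  have hsum2 : ∑ i, e i * Ps i / (σ2 * Real.log 2) ≤ m * P_CBS / (σ2 * Real.log 2) := by
    have h1 : ∑ i, e i * Ps i / (σ2 * Real.log 2) = (∑ i, e i * Ps i) / (σ2 * Real.log 2) := by
      rw [Finset.sum_div]
    rw [h1]
    apply div_le_div_of_nonneg_right _ hσlog.le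
    calc ∑ i, e i * Ps i ≤ ∑ i, m * Ps i :=
          Finset.sum_le_sum fun i _ =>
            mul_le_mul_of_nonneg_right (Finset.le_sup' e (Finset.mem_univ i)) (hPs i)
      _ = m * ∑ i, Ps i := by rw [Finset.mul_sum]
      _ ≤ m * P_CBS := by
          apply mul_le_mul_of_nonneg_left _ hm0
          calc ∑ i, Ps i ≤ ∑ i, (Ps i + Pz i) :=
                Finset.sum_le_sum fun i _ => by linarith [hPz i]
            _ ≤ P_CBS := hsum
  have hη2 : 0 ≤ η * (∑ i, (Ps i + Pz i) + Pb) := by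
    apply mul_nonneg hη
    have : (0:ℝ) ≤ ∑ i, (Ps i + Pz i) :=
      Finset.sum_nonneg fun i _ => by linarith [hPs i, hPz i]
    linarith
  linarith
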